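/- Let k ≥ 3 and s : ZMod k → {−1,+1} with ∏_i s_i = −1, and set J = 2/cos(π/k). Then the purely imaginary number 2 i tan(π/k) is an eigenvalue of the k × k real matrix A with A_{ii} = −2, A_{i,c(i)} = s_i J (c(i) = i+1 mod k) and all other entries 0; this eigenvalue is nonzero and purely imaginary, and its complex conjugate −2 i tan(π/k) is also an eigenvalue. -/

import Mathlib

/-- The Jacobian matrix at `(1/2,…,1/2)` of the cyclic-interaction field:
`A_{ii} = −2`, `A_{i,i+1} = s_i J`, all other entries `0`. -/
noncomputable def cycA (k : ℕ) (J : ℝ) (s : ZMod k → ℝ) :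
    Matrix (ZMod k) (ZMod k) ℝ :=
  Matrix.of fun i j => if j = i then -2 else if j = i + 1 then s i * J else 0

lemma prod_zmod_eq_prod_range {k : ℕ} [NeZero k] (f : ZMod k → ℝ) :
    ∏ i : ZMod k, f i = ∏ j ∈ Finset.range k, f (j : ZMod k) := by
  refine Finset.prod_bij' (fun i _ => i.val) (fun j _ => (j : ZMod k)) ?_ ?_ ?_ ?_ ?_
  · intro i _; exact Finset.mem_range.mpr (ZMod.val_lt i)
  · intro j _; exact Finset.mem_univ _
  · intro i _; simp [ZMod.natCast_val, ZMod.cast_id]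
  · intro j hj; exact ZMod.val_cast_of_lt (Finset.mem_range.mp hj)
  · intro i _; simp [ZMod.natCast_val, ZMod.cast_id]

lemma key_aux (θ : ℝ) (h : Real.cos θ ≠ 0) :
    ((2 / Real.cos θ : ℝ) : ℂ) * Complex.exp (θ * Complex.I) - 2
      = Complex.I * (2 * Real.tan θ) := by
  have hC : Complex.cos ↑θ ≠ 0 := by
    rw [← Complex.ofReal_cos]; exact Complex.ofReal_ne_zero.mpr h
  rw [Complex.exp_mul_I, ← Complex.ofReal_cos, ← Complex.ofReal_sin,
    Real.tan_eq_sin_div_cos, Complex.ofReal_div, Complex.ofReal_div]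
  field_simp
  have hc' : ((Real.cos θ : ℝ) : ℂ) ≠ 0 := by exact_mod_cast h
  field_simp
  push_cast
  ring

lemma cycA_eig (k : ℕ) [NeZero k] (hk : 3 ≤ k) (J : ℝ)
    (s : ZMod k → ℝ) (hs : ∀ i, s i = 1 ∨ s i = -1)
    (hprod : ∏ i : ZMod k, s i = -1)
    (ζ : ℂ) (hζ : ζ ^ k = -1) :
    Module.End.HasEigenvalue
      (Matrix.toLin' ((cycA k J s).map (fun a => (a : ℂ))))
      ((J : ℂ) * ζ - 2) := by
  haveI : Fact (1 < k) := ⟨by omega⟩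
  set P : ℕ → ℂ := fun n => ∏ j ∈ Finset.range n, (s (j : ZMod k) : ℂ) with hP
  set v : ZMod k → ℂ := fun i => ζ ^ i.val * P i.val with hv
  have hssq : ∀ i, (s i : ℂ) * (s i : ℂ) = 1 := by
    intro i; rcases hs i with h | h <;> simp [h]
  have hstep : ∀ i : ZMod k, (s i : ℂ) * v (i + 1) = ζ * v i := by
    intro i
    have hiv : i.val < k := ZMod.val_lt i
    have hcast : ((i.val : ℕ) : ZMod k) = i := by
      simp [ZMod.natCast_val, ZMod.cast_id]
    rcases Nat.lt_or_ge (i.val + 1) k with hlt | hge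
    · have hval : (i + 1).val = i.val + 1 := by
        rw [ZMod.val_add_of_lt] <;> rw [ZMod.val_one] <;> omega
      simp only [hv, hval, hP, Finset.prod_range_succ, hcast, pow_succ]
      linear_combination (ζ ^ i.val * ζ * P i.val) * hssq i
    · have heq : i.val + 1 = k := by omega
      have hi1 : i + 1 = 0 := by
        have h1 : ((i.val + 1 : ℕ) : ZMod k) = 0 := by rw [heq, ZMod.natCast_self]
        push_cast at h1
        rwa [hcast] at h1
      have hv0 : v (i + 1) = 1 := by
        rw [hi1]; simp [hv, hP, ZMod.val_zero]
      have hPk : P i.val * (s i : ℂ) = -1 := by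
        have h1 : ∏ j ∈ Finset.range k, (s (j : ZMod k) : ℂ) = -1 := by
          rw [prod_zmod_eq_prod_range] at hprod
          have := congrArg (fun x : ℝ => (x : ℂ)) hprod
          push_cast at this
          simpa using this
        have h2 : P k = -1 := h1
        rw [show k = i.val + 1 from heq.symm, hP] at h2
        simpa [Finset.prod_range_succ, hcast] using h2
      have hPval : P i.val = -(s i : ℂ) := by
        linear_combination (s i : ℂ) * hPk - P i.val * hssq i
      have hzk : ζ * ζ ^ i.val = -1 := by
        have h3 : ζ ^ (i.val + 1) = -1 := by rw [heq, hζ]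
        rw [pow_succ] at h3
        linear_combination h3
      rw [hv0, hv]
      simp only [hPval]
      linear_combination (s i : ℂ) * hzk
  have hv0 : v 0 = 1 := by simp [hv, hP, ZMod.val_zero]
  have hvne : v ≠ 0 := by
    intro h
    have := congrFun h 0
    rw [hv0] at this
    simp at this
  have hne : ∀ i : ZMod k, i ≠ i + 1 := by
    intro i h
    exact one_ne_zero (left_eq_add.mp h)
  refine Module.End.hasEigenvalue_of_hasEigenvector (x := v) ⟨?_, hvne⟩
  rw [Module.End.mem_eigenspace_iff, Matrix.toLin'_apply]
  funext i
  have hsum : ((cycA k J s).map (fun a => (a : ℂ))).mulVec v i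
      = -2 * v i + ((s i : ℂ) * (J : ℂ)) * v (i + 1) := by
    simp only [Matrix.mulVec, dotProduct, Matrix.map_apply, cycA, Matrix.of_apply]
    rw [Finset.sum_congr rfl (fun j _ => show
        (((if j = i then (-2 : ℝ) else if j = i + 1 then s i * J else 0) : ℝ) : ℂ) * v j
        = (if j = i then (-2 : ℂ) * v j else 0)
          + (if j = i + 1 then ((s i : ℂ) * (J : ℂ)) * v j else 0) by
      split_ifs with h1 h2
      · exact absurd (h1 ▸ h2) (hne i)
      · push_cast; ring
      · push_cast; ring
      · push_cast; ring)]
    rw [Finset.sum_add_distrib, Finset.sum_ite_eq', Finset.sum_ite_eq']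
    simp
  rw [hsum]
  have := hstep i
  simp only [Pi.smul_apply, smul_eq_mul]
  linear_combination (J : ℂ) * this

theorem statement14 (k : ℕ) [NeZero k] (hk : 3 ≤ k)
    (s : ZMod k → ℝ) (hs : ∀ i, s i = 1 ∨ s i = -1)
    (hprod : ∏ i : ZMod k, s i = -1) :
    Module.End.HasEigenvalue
      (Matrix.toLin'
        ((cycA k (2 / Real.cos (Real.pi / k)) s).map (fun a => (a : ℂ))))
      (Complex.I * (2 * Real.tan (Real.pi / k))) ∧
    Complex.I * (2 * Real.tan (Real.pi / k)) ≠ 0 ∧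
    (Complex.I * (2 * Real.tan (Real.pi / k))).re = 0 ∧
    Module.End.HasEigenvalue
      (Matrix.toLin'
        ((cycA k (2 / Real.cos (Real.pi / k)) s).map (fun a => (a : ℂ))))
      (-(Complex.I * (2 * Real.tan (Real.pi / k)))) := by
  set θ : ℝ := Real.pi / k with hθ
  have hkpos : (0 : ℝ) < k := by positivity
  have hθpos : 0 < θ := by positivity
  have hθlt : θ < Real.pi / 2 := by
    rw [hθ]
    apply div_lt_div_of_pos_left Real.pi_pos (by norm_num)
    · exact_mod_cast by omega
  have hcos : Real.cos θ ≠ 0 :=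
    ne_of_gt (Real.cos_pos_of_mem_Ioo ⟨by linarith [Real.pi_pos], hθlt⟩)
  have hsin : Real.sin θ ≠ 0 := ne_of_gt (Real.sin_pos_of_pos_of_lt_pi hθpos
    (by linarith [Real.pi_pos]))
  have hkθ : ((k : ℂ)) * ((θ : ℂ) * Complex.I) = (Real.pi : ℂ) * Complex.I := by
    have : (k : ℝ) * θ = Real.pi := by rw [hθ]; field_simp
    have h2 : ((k : ℝ) * θ : ℝ) = (Real.pi : ℝ) := this
    have h3 := congrArg (fun x : ℝ => (x : ℂ)) h2
    push_cast at h3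
    rw [← mul_assoc, h3]
  have hζ1 : (Complex.exp (θ * Complex.I)) ^ k = -1 := by
    rw [← Complex.exp_nat_mul, hkθ, Complex.exp_pi_mul_I]
  have hζ2 : (Complex.exp ((-θ : ℝ) * Complex.I)) ^ k = -1 := by
    rw [← Complex.exp_nat_mul,
      show ((k : ℂ)) * (((-θ : ℝ) : ℂ) * Complex.I)
          = -((k : ℂ) * ((θ : ℂ) * Complex.I)) by push_cast; ring,
      hkθ, Complex.exp_neg, Complex.exp_pi_mul_I]
    norm_num
  have h1 := cycA_eig k hk (2 / Real.cos θ) s hs hprod _ hζ1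
  have h2 := cycA_eig k hk (2 / Real.cos θ) s hs hprod _ hζ2
  have key1 := key_aux θ hcos
  have key2 : ((2 / Real.cos θ : ℝ) : ℂ) * Complex.exp ((-θ : ℝ) * Complex.I) - 2
      = -(Complex.I * (2 * Real.tan θ)) := by
    have := key_aux (-θ) (by rwa [Real.cos_neg])
    rw [Real.cos_neg, Real.tan_neg] at this
    rw [this]
    push_cast
    ring
  rw [key1] at h1
  rw [key2] at h2
  have htanne : Real.tan θ ≠ 0 := by
    rw [Real.tan_eq_sin_div_cos]
    exact div_ne_zero hsin hcos
  refine ⟨h1, ?_, by simp, h2⟩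
  exact mul_ne_zero Complex.I_ne_zero
    (mul_ne_zero two_ne_zero (Complex.ofReal_ne_zero.mpr htanne))
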